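/- The function g(z) = e^{-z²/2} · ((1 − e^{-z²})/z²)^{1/2} · z (extended holomorphically through z = 0 with value determined by the principal branch of the square root, noting (1−e^{-z²})/z² → 1 as z → 0) is holomorphic on some horizontal strip {z ∈ ℂ : |Im z| ≤ 2w} with w > 0, and for every k ∈ ℕ there is M_k > 0 such that |g(z) z^k| ≤ M_k on that strip. -/

import Mathlib

open Complex

protected noncomputable def Complex.abs : AbsoluteValue ℂ ℝ where
  toFun z := ‖z‖
  map_mul' := norm_mul
  nonneg' := norm_nonneg
  eq_zero' _ := norm_eq_zero
  add_le' := norm_add_le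

protected lemma Complex.norm_eq_abs (z : ℂ) : ‖z‖ = Complex.abs z := rfl
protected lemma Complex.abs_exp (z : ℂ) : Complex.abs (Complex.exp z) = Real.exp z.re :=
  Complex.norm_exp z
protected lemma Complex.sq_abs (z : ℂ) : Complex.abs z ^ 2 = Complex.normSq z := Complex.sq_norm z
protected lemma Complex.abs_re_le_abs (z : ℂ) : |z.re| ≤ Complex.abs z := Complex.abs_re_le_norm z
protected lemma Complex.re_le_abs (z : ℂ) : z.re ≤ Complex.abs z := Complex.re_le_norm z
protected lemma Complex.abs_im_le_abs (z : ℂ) : |z.im| ≤ Complex.abs z := Complex.abs_im_le_norm z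
protected lemma Complex.abs_exp_sub_one_sub_id_le {x : ℂ} (hx : Complex.abs x ≤ 1) :
    Complex.abs (Complex.exp x - 1 - x) ≤ Complex.abs x ^ 2 :=
  Complex.norm_exp_sub_one_sub_id_le hx
protected lemma Complex.abs_cpow_le (z w : ℂ) :
    Complex.abs (z ^ w) ≤ Complex.abs z ^ w.re / Real.exp (Complex.arg z * w.im) :=
  Complex.norm_cpow_le z w

/-- Holomorphic extension of `(1 - e^{-z²})/z²` through `0`. -/
noncomputable def hh (z : ℂ) : ℂ := if z = 0 then 1 else (1 - Complex.exp (-z ^ 2)) / z ^ 2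

lemma hh_ne {z : ℂ} (hz : z ≠ 0) : hh z = (1 - Complex.exp (-z ^ 2)) / z ^ 2 := if_neg hz

lemma hh_diff : Differentiable ℂ hh := by
  have hform : ∀ z : ℂ, z ≠ 0 → DifferentiableAt ℂ hh z := by
    intro z hz
    have hnum : DifferentiableAt ℂ (fun w : ℂ => 1 - Complex.exp (-w ^ 2)) z := by fun_prop
    have hden : DifferentiableAt ℂ (fun w : ℂ => w ^ 2) z := by fun_prop
    have h1 := hnum.div hden (pow_ne_zero 2 hz)
    apply h1.congr_of_eventuallyEq
    filter_upwards [isOpen_ne.mem_nhds hz] with w hw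
    exact hh_ne hw
  intro z
  rcases eq_or_ne z 0 with rfl | hz
  · -- removable singularity at 0
    have hd : ∀ᶠ w in nhdsWithin 0 {(0:ℂ)}ᶜ, DifferentiableAt ℂ hh w := by
      filter_upwards [self_mem_nhdsWithin] with w hw
      exact hform w hw
    have hphi : Filter.Tendsto (fun w : ℂ => (1 - Complex.exp (-w)) / w)
        (nhdsWithin 0 {(0:ℂ)}ᶜ) (nhds 1) := by
      have hder : HasDerivAt (fun u : ℂ => Complex.exp (-u)) (-1) 0 := by
        simpa [Function.comp_def] using (Complex.hasDerivAt_exp (-0)).comp 0 (hasDerivAt_neg (0:ℂ))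
      have hslope := hasDerivAt_iff_tendsto_slope.mp hder
      have hneg : Filter.Tendsto (fun w : ℂ => -(slope (fun u : ℂ => Complex.exp (-u)) 0 w))
          (nhdsWithin 0 {(0:ℂ)}ᶜ) (nhds 1) := by
        simpa using hslope.neg
      apply hneg.congr'
      filter_upwards [self_mem_nhdsWithin] with w hw
      have hw0 : w ≠ 0 := hw
      simp only [slope_def_field]
      field_simp
      simp only [neg_zero, Complex.exp_zero, sub_zero]
      ring
    have hsq : Filter.Tendsto (fun z : ℂ => z ^ 2)
        (nhdsWithin 0 {(0:ℂ)}ᶜ) (nhdsWithin 0 {(0:ℂ)}ᶜ) := by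
      apply tendsto_nhdsWithin_of_tendsto_nhds_of_eventually_within
      · have := ((continuous_pow 2).tendsto (0:ℂ)).mono_left
          (nhdsWithin_le_nhds (s := {(0:ℂ)}ᶜ))
        simpa using this
      · filter_upwards [self_mem_nhdsWithin] with w hw
        exact pow_ne_zero 2 hw
    have key : Filter.Tendsto hh (nhdsWithin 0 {(0:ℂ)}ᶜ) (nhds 1) := by
      apply (hphi.comp hsq).congr'
      filter_upwards [self_mem_nhdsWithin] with w hw
      simp [hh_ne hw, Function.comp]
    have hc : ContinuousAt hh 0 := by
      rw [ContinuousAt, show hh 0 = 1 from if_pos rfl, ← nhdsNE_sup_pure]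
      refine key.sup ?_
      have := tendsto_pure_nhds hh (0:ℂ)
      simpa [show hh 0 = 1 from if_pos rfl] using this
    exact (Complex.analyticAt_of_differentiable_on_punctured_nhds_of_continuousAt
      hd hc).differentiableAt
  · exact hform z hz

lemma hh_re_pos {z : ℂ} (him : z.im ^ 2 ≤ 1/2500) : 0 < (hh z).re := by
  rcases eq_or_ne z 0 with rfl | hz0
  · simp [hh]
  rcases lt_or_ge (Complex.abs z) 1 with hlt | hge
  · -- small |z|
    have hs0 : z ^ 2 ≠ 0 := pow_ne_zero 2 hz0
    have habs : Complex.abs (z ^ 2) < 1 := by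
      rw [map_pow]
      nlinarith [Complex.abs.nonneg z]
    have key : Complex.abs (hh z - 1) ≤ Complex.abs (z ^ 2) := by
      rw [hh_ne hz0]
      have h2 : (1 - Complex.exp (-z ^ 2)) / z ^ 2 - 1
          = -((Complex.exp (-(z ^ 2)) - 1 - (-(z ^ 2))) / z ^ 2) := by
        field_simp
        ring
      rw [h2, map_neg_eq_map, map_div₀]
      have h3 := Complex.abs_exp_sub_one_sub_id_le (x := -(z ^ 2))
        (by simpa using habs.le)
      rw [div_le_iff₀ (Complex.abs.pos hs0)]
      calc Complex.abs (Complex.exp (-(z ^ 2)) - 1 - (-(z ^ 2)))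
          ≤ Complex.abs (-(z ^ 2)) ^ 2 := h3
        _ = Complex.abs (z ^ 2) * Complex.abs (z ^ 2) := by rw [map_neg_eq_map]; ring
    have h4 : |(hh z - 1).re| ≤ Complex.abs (z ^ 2) :=
      (Complex.abs_re_le_abs _).trans key
    have h5 : (hh z - 1).re = (hh z).re - 1 := by simp
    rw [h5] at h4
    have := abs_le.mp h4
    linarith [this.1]
  · -- large |z|
    set x := z.re with hx
    set y := z.im with hy
    have hxy : 1 ≤ x ^ 2 + y ^ 2 := by
      have h1 : Complex.abs z ^ 2 = x ^ 2 + y ^ 2 := by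
        rw [Complex.sq_abs, Complex.normSq_apply]; ring
      nlinarith
    have ha : (z ^ 2).re = x ^ 2 - y ^ 2 := by
      rw [pow_two, Complex.mul_re]; ring
    have hb : (z ^ 2).im = 2 * x * y := by
      rw [pow_two, Complex.mul_im]; ring
    have ha1 : (0.9992 : ℝ) ≤ x ^ 2 - y ^ 2 := by nlinarith
    have hea : Real.exp (-(x ^ 2 - y ^ 2)) ≤ 0.51 := by
      have h1 := Real.add_one_le_exp (x ^ 2 - y ^ 2)
      rw [Real.exp_neg, inv_le_comm₀ (Real.exp_pos _) (by norm_num)]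
      calc (0.51:ℝ)⁻¹ ≤ 1 + (x ^ 2 - y ^ 2) := by norm_num; linarith
        _ ≤ Real.exp (x ^ 2 - y ^ 2) := by linarith
    have hEabs : Complex.abs (Complex.exp (-z ^ 2)) = Real.exp (-(x ^ 2 - y ^ 2)) := by
      rw [Complex.abs_exp]; congr 1
      rw [Complex.neg_re, ha]
    have hEre : (Complex.exp (-z ^ 2)).re ≤ 0.51 :=
      (Complex.re_le_abs _).trans (hEabs ▸ hea)
    have hEim : |(Complex.exp (-z ^ 2)).im| ≤ 0.51 :=
      ((Complex.abs_im_le_abs _).trans (le_of_eq hEabs)).trans hea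
    have hyb : |y| ≤ 1/50 := by
      rw [← Real.sqrt_sq_eq_abs]
      calc Real.sqrt (y ^ 2) ≤ Real.sqrt (1/2500) := Real.sqrt_le_sqrt him
        _ = 1/50 := by rw [show (1:ℝ)/2500 = (1/50)^2 by norm_num, Real.sqrt_sq]; norm_num
    have hbb : |2 * x * y| ≤ 0.06 * (x ^ 2 - y ^ 2) := by
      have h2x : 2 * |x| ≤ x ^ 2 + 1 := by nlinarith [_root_.sq_abs x, abs_nonneg x, sq_nonneg (|x| - 1)]
      have h6 : |2 * x * y| = 2 * |x| * |y| := by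
        rw [abs_mul, abs_mul]; simp [_root_.abs_of_nonneg]
      rw [h6]
      have h7 : 2 * |x| * |y| ≤ (x ^ 2 + 1) * (1/50) :=
        mul_le_mul h2x hyb (abs_nonneg y) (by positivity)
      nlinarith
    have hprod : |(Complex.exp (-z ^ 2)).im * (2 * x * y)| ≤ 0.51 * (0.06 * (x ^ 2 - y ^ 2)) := by
      rw [abs_mul]
      exact mul_le_mul hEim hbb (abs_nonneg _) (by norm_num)
    rw [hh_ne hz0, Complex.div_re]
    have hns : (0:ℝ) < Complex.normSq (z ^ 2) :=
      Complex.normSq_pos.mpr (pow_ne_zero 2 hz0)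
    rw [← add_div]
    apply div_pos _ hns
    have hre1 : (1 - Complex.exp (-z ^ 2)).re = 1 - (Complex.exp (-z ^ 2)).re := by simp
    have him1 : (1 - Complex.exp (-z ^ 2)).im = -(Complex.exp (-z ^ 2)).im := by simp
    rw [hre1, him1, ha, hb]
    have h8 := (le_abs_self ((Complex.exp (-z ^ 2)).im * (2 * x * y))).trans hprod
    have h9 : 0.49 * (x ^ 2 - y ^ 2) ≤ (1 - (Complex.exp (-z ^ 2)).re) * (x ^ 2 - y ^ 2) := by
      nlinarith
    linarith

/-- The holomorphic function `g`. -/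
noncomputable def gg (z : ℂ) : ℂ := Complex.exp (-z ^ 2 / 2) * hh z ^ ((1:ℂ)/2) * z

lemma gg_diffAt {z : ℂ} (him : z.im ^ 2 ≤ 1/2500) : DifferentiableAt ℂ gg z := by
  have h1 : DifferentiableAt ℂ (fun w : ℂ => Complex.exp (-w ^ 2 / 2)) z := by fun_prop
  have h2 : DifferentiableAt ℂ (fun w : ℂ => hh w ^ ((1:ℂ)/2)) z := by
    apply DifferentiableAt.cpow (hh_diff z) (differentiableAt_const _)
    exact Or.inl (hh_re_pos him)
  exact (h1.mul h2).mul differentiableAt_id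

lemma exp_half_le_two : Real.exp (1/2) ≤ 2 := by
  have h1 : Real.exp (1/2) * Real.exp (1/2) = Real.exp 1 := by
    rw [← Real.exp_add]; norm_num
  nlinarith [Real.exp_pos (1/2 : ℝ), Real.exp_one_lt_d9]

lemma key_bound {z : ℂ} (hz0 : z ≠ 0) (him : z.im ^ 2 ≤ 1/2500) :
    Complex.abs (hh z ^ ((1:ℂ)/2)) * Complex.abs z ≤ 2 := by
  have h1 : Complex.abs (hh z ^ ((1:ℂ)/2)) ≤ Real.sqrt (Complex.abs (hh z)) := by
    have h2 := Complex.abs_cpow_le (hh z) ((1:ℂ)/2)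
    simp only [Complex.div_re, Complex.one_re, Complex.one_im, Complex.div_im] at h2
    rw [Real.sqrt_eq_rpow]
    calc Complex.abs (hh z ^ ((1:ℂ)/2))
        ≤ Complex.abs (hh z) ^ (((1:ℂ)/2).re) / Real.exp (Complex.arg (hh z) * ((1:ℂ)/2).im) :=
          Complex.abs_cpow_le _ _
      _ = Complex.abs (hh z) ^ ((1:ℝ)/2) := by norm_num
  have habs : Complex.abs (hh z) = Complex.abs (1 - Complex.exp (-z ^ 2)) / Complex.abs z ^ 2 := by
    rw [hh_ne hz0, map_div₀, map_pow]
  have hA : Complex.abs (1 - Complex.exp (-z ^ 2)) ≤ 4 := by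
    have h3 : Complex.abs (Complex.exp (-z ^ 2)) = Real.exp (z.im ^ 2 - z.re ^ 2) := by
      rw [Complex.abs_exp]; congr 1
      rw [Complex.neg_re, pow_two, Complex.mul_re]; ring
    have h4 : Real.exp (z.im ^ 2 - z.re ^ 2) ≤ Real.exp 1 :=
      Real.exp_le_exp.mpr (by nlinarith [sq_nonneg z.re])
    calc Complex.abs (1 - Complex.exp (-z ^ 2))
        ≤ Complex.abs 1 + Complex.abs (Complex.exp (-z ^ 2)) := by
          simpa using Complex.abs.sub_le_add 1 (Complex.exp (-z ^ 2))
      _ ≤ 1 + Real.exp 1 := by rw [h3, map_one]; linarith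
      _ ≤ 4 := by nlinarith [Real.exp_one_lt_d9]
  have hzpos : (0:ℝ) < Complex.abs z := Complex.abs.pos hz0
  calc Complex.abs (hh z ^ ((1:ℂ)/2)) * Complex.abs z
      ≤ Real.sqrt (Complex.abs (hh z)) * Complex.abs z := by
        exact mul_le_mul_of_nonneg_right h1 (Complex.abs.nonneg z)
    _ = Real.sqrt (Complex.abs (1 - Complex.exp (-z ^ 2))) := by
        rw [habs, Real.sqrt_div (Complex.abs.nonneg _), show Complex.abs z ^ 2
          = (Complex.abs z) ^ 2 from rfl, Real.sqrt_sq hzpos.le]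
        field_simp
    _ ≤ Real.sqrt 4 := Real.sqrt_le_sqrt hA
    _ = 2 := by
        rw [show (4:ℝ) = 2 ^ 2 by norm_num, Real.sqrt_sq (by norm_num)]

set_option maxHeartbeats 1000000 in
theorem stmt1 :
    ∃ w : ℝ, 0 < w ∧ ∃ g : ℂ → ℂ,
      DifferentiableOn ℂ g {z : ℂ | |z.im| ≤ 2 * w} ∧
      (∀ z ∈ {z : ℂ | |z.im| ≤ 2 * w}, z ≠ 0 →
        g z = Complex.exp (-z ^ 2 / 2) *
          ((1 - Complex.exp (-z ^ 2)) / z ^ 2) ^ ((1 : ℂ) / 2) * z) ∧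
      (∀ k : ℕ, ∃ M : ℝ, 0 < M ∧ ∀ z ∈ {z : ℂ | |z.im| ≤ 2 * w}, ‖g z * z ^ k‖ ≤ M) := by
  refine ⟨1/100, by norm_num, gg, ?_, ?_, ?_⟩
  · intro z hz
    have him : z.im ^ 2 ≤ 1/2500 := by
      have h := hz
      simp only [Set.mem_setOf_eq] at h
      nlinarith [_root_.sq_abs z.im, abs_nonneg z.im]
    exact (gg_diffAt him).differentiableWithinAt
  · intro z hz hz0
    simp only [gg, hh_ne hz0]
  · intro k
    refine ⟨16 * 2 ^ k * (Nat.factorial k : ℝ), by positivity, ?_⟩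
    intro z hz
    have him : z.im ^ 2 ≤ 1/2500 := by
      have h := hz
      simp only [Set.mem_setOf_eq] at h
      nlinarith [_root_.sq_abs z.im, abs_nonneg z.im]
    rcases eq_or_ne z 0 with rfl | hz0
    · simp [gg]
    have h1 : ‖gg z * z ^ k‖ = Real.exp ((-z ^ 2 / 2).re) *
        (Complex.abs (hh z ^ ((1:ℂ)/2)) * Complex.abs z) * Complex.abs z ^ k := by
      rw [Complex.norm_eq_abs]
      simp only [gg, map_mul, map_pow, Complex.abs_exp]
      ring
    have hexp : Real.exp ((-z ^ 2 / 2).re) ≤ 2 * Real.exp (-(z.re ^ 2) / 2) := by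
      have h2 : (-z ^ 2 / 2).re = (z.im ^ 2 - z.re ^ 2) / 2 := by
        rw [Complex.div_re]
        simp [Complex.neg_re, Complex.neg_im, pow_two, Complex.mul_re, Complex.mul_im,
          Complex.normSq_apply]
        ring
      rw [h2]
      have h3 : (z.im ^ 2 - z.re ^ 2) / 2 = z.im ^ 2 / 2 + (-(z.re ^ 2) / 2) := by ring
      rw [h3, Real.exp_add]
      have h4 : Real.exp (z.im ^ 2 / 2) ≤ 2 := by
        refine le_trans (Real.exp_le_exp.mpr ?_) exp_half_le_two
        linarith
      exact mul_le_mul_of_nonneg_right h4 (Real.exp_pos _).le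
    have hzk : Complex.abs z ^ k ≤ (z.re ^ 2 + 1) ^ k := by
      apply pow_le_pow_left₀ (Complex.abs.nonneg z)
      have h5 : Complex.abs z ^ 2 = z.re ^ 2 + z.im ^ 2 := by
        rw [Complex.sq_abs, Complex.normSq_apply]; ring
      nlinarith [Complex.abs.nonneg z, sq_nonneg (Complex.abs z - (z.re ^ 2 + 1))]
    have hpoly : Real.exp (-(z.re ^ 2) / 2) * (z.re ^ 2 + 1) ^ k
        ≤ 2 * 2 ^ k * (Nat.factorial k : ℝ) := by
      have ht0 : (0:ℝ) ≤ (z.re ^ 2 + 1) / 2 := by positivity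
      have h6 : ((z.re ^ 2 + 1) / 2) ^ k
          ≤ (Nat.factorial k : ℝ) * Real.exp ((z.re ^ 2 + 1) / 2) := by
        have h := Real.pow_div_factorial_le_exp ((z.re ^ 2 + 1) / 2) ht0 k
        rw [div_le_iff₀ (by positivity)] at h
        linarith
      have h7 : ((z.re ^ 2 + 1):ℝ) ^ k = 2 ^ k * ((z.re ^ 2 + 1) / 2) ^ k := by
        rw [← mul_pow]; congr 1; ring
      have h8 : Real.exp (-(z.re ^ 2) / 2) * Real.exp ((z.re ^ 2 + 1) / 2) = Real.exp (1/2) := by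
        rw [← Real.exp_add]; congr 1; ring
      have hexpk : (0:ℝ) < 2 ^ k := by positivity
      have hfk : (0:ℝ) < (Nat.factorial k : ℝ) := by exact_mod_cast Nat.factorial_pos k
      calc Real.exp (-(z.re ^ 2) / 2) * (z.re ^ 2 + 1) ^ k
          = Real.exp (-(z.re ^ 2) / 2) * 2 ^ k * ((z.re ^ 2 + 1) / 2) ^ k := by
            rw [h7]; ring
        _ ≤ Real.exp (-(z.re ^ 2) / 2) * 2 ^ k
            * ((Nat.factorial k : ℝ) * Real.exp ((z.re ^ 2 + 1) / 2)) :=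
            mul_le_mul_of_nonneg_left h6 (by positivity)
        _ = 2 ^ k * (Nat.factorial k : ℝ)
            * (Real.exp (-(z.re ^ 2) / 2) * Real.exp ((z.re ^ 2 + 1) / 2)) := by ring
        _ = 2 ^ k * (Nat.factorial k : ℝ) * Real.exp (1/2) := by rw [h8]
        _ ≤ 2 * 2 ^ k * (Nat.factorial k : ℝ) := by
            nlinarith [exp_half_le_two, mul_pos hexpk hfk]
    have hstep := mul_le_mul (mul_le_mul hexp (key_bound hz0 him)
        (mul_nonneg (Complex.abs.nonneg _) (Complex.abs.nonneg _)) (by positivity)) hzk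
        (pow_nonneg (Complex.abs.nonneg z) k) (by positivity)
    have hfin : (2 * Real.exp (-(z.re ^ 2) / 2)) * 2 * (z.re ^ 2 + 1) ^ k
        ≤ 16 * 2 ^ k * (Nat.factorial k : ℝ) := by
      nlinarith [hpoly, pow_pos (by norm_num : (0:ℝ) < 2) k,
        (Nat.cast_pos (α := ℝ)).mpr (Nat.factorial_pos k), Real.exp_pos (-(z.re ^ 2) / 2),
        pow_nonneg (by positivity : (0:ℝ) ≤ z.re ^ 2 + 1) k]
    exact le_of_eq h1 |>.trans (hstep.trans hfin)
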